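/- Let Π_1,…,Π_n be pairwise commuting orthogonal projections on a Hilbert space with Π_i Π_{i+1} = 0 for all i (indices cyclic mod n, n odd), and let ρ be a density operator. Then ∑_{i=1}^n tr(Π_i ρ) ≤ (n−1)/2. -/

import Mathlib

open Matrix ComplexOrder

lemma aux_psd_smul {d : ℕ} {A : Matrix (Fin d) (Fin d) ℂ} (hA : A.PosSemidef) {r : ℝ} (hr : 0 ≤ r) :
    ((r : ℂ) • A).PosSemidef := by
  rw [posSemidef_iff_dotProduct_mulVec]
  constructor
  · unfold Matrix.IsHermitian
    rw [conjTranspose_smul, hA.1.eq]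
    norm_num
  · intro x
    rw [smul_mulVec, dotProduct_smul, smul_eq_mul]
    exact mul_nonneg (by exact_mod_cast Complex.zero_le_real.2 hr) (hA.dotProduct_mulVec_nonneg x)

lemma aux_trace_nonneg {d : ℕ} {A ρ : Matrix (Fin d) (Fin d) ℂ} (hA : A.PosSemidef)
    (hρ : ρ.PosSemidef) : 0 ≤ ((A * ρ).trace).re := by
  open scoped MatrixOrder in
  obtain ⟨B, rfl⟩ := CStarAlgebra.nonneg_iff_eq_star_mul_self.mp hA.nonneg
  rw [Matrix.mul_assoc, Matrix.trace_mul_comm]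
  have h2 : (B * ρ * Bᴴ).PosSemidef := hρ.mul_mul_conjTranspose_same B
  have hdiag : ∀ i, 0 ≤ (B * ρ * Bᴴ) i i := by
    intro i
    have := h2.dotProduct_mulVec_nonneg (Pi.single i 1)
    simpa [dotProduct, Matrix.mulVec, Pi.single_apply, Finset.sum_ite_eq] using this
  rw [Matrix.mul_assoc] at hdiag ⊢
  rw [Matrix.trace]
  simp only [Complex.re_sum]
  exact Finset.sum_nonneg fun i _ => (Complex.le_def.mp (hdiag i)).1

lemma aux_card {n : ℕ} [NeZero n] (hn : Odd n) (S : Finset (Fin n))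
    (h : ∀ i ∈ S, i + 1 ∉ S) : 2 * S.card + 1 ≤ n := by
  classical
  have hinj : Function.Injective (fun i : Fin n => i + 1) := fun a b hab => by
    simpa using add_left_injective 1 hab
  have hdisj : Disjoint S (S.image (· + 1)) := by
    rw [Finset.disjoint_left]
    intro a ha hmem
    obtain ⟨i, hi, rfl⟩ := Finset.mem_image.mp hmem
    exact h i hi ha
  have hcard : S.card + S.card ≤ n := by
    have hu := Finset.card_union_of_disjoint hdisj
    have hle : (S ∪ S.image (· + 1)).card ≤ Fintype.card (Fin n) := Finset.card_le_univ _
    rw [hu, Finset.card_image_of_injective _ hinj, Fintype.card_fin] at hle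
    exact hle
  obtain ⟨k, hk⟩ := hn
  omega

lemma aux_key {R : Type*} [CommRing R] {d n : ℕ} [NeZero n]
    (φ : R →+* Matrix (Fin d) (Fin d) ℂ)
    (q : Fin n → R)
    (hq2 : ∀ i, q i * q i = q i)
    (hqorth : ∀ i, q i * q (i + 1) = 0)
    (hherm : ∀ i, (φ (q i))ᴴ = φ (q i))
    (hne : ∀ i : Fin n, i + 1 ≠ i)
    (hcard : ∀ S : Finset (Fin n), (∀ i ∈ S, i + 1 ∉ S) → (S.card : ℝ) ≤ ((n : ℝ) - 1) / 2) :
    (((((n : ℝ) - 1) / 2 : ℝ) : ℂ) • (1 : Matrix (Fin d) (Fin d) ℂ) - ∑ i, φ (q i)).PosSemidef := by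
  classical
  set c : ℝ := ((n : ℝ) - 1) / 2 with hc
  set E : Finset (Fin n) → R := fun S => (∏ i ∈ S, q i) * ∏ i ∈ Sᶜ, (1 - q i) with hE
  have hq1 : ∀ i, q i * (1 - q i) = 0 := by
    intro i
    rw [mul_sub, mul_one, hq2, sub_self]
  -- sum of all E S equals 1
  have hEsum : ∑ S : Finset (Fin n), E S = 1 := by
    have h := Finset.prod_add q (fun i => 1 - q i) Finset.univ
    simp only [add_sub_cancel, Finset.prod_const_one, Finset.powerset_univ,
      ← Finset.compl_eq_univ_sdiff] at h
    rw [hE]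
    exact h.symm
  -- multiplication rules
  have hmulE : ∀ i S, i ∈ S → q i * E S = E S := by
    intro i S hi
    rw [hE]
    simp only
    rw [← Finset.mul_prod_erase S q hi, ← mul_assoc, ← mul_assoc, hq2]
  have hmulE0 : ∀ i S, i ∉ S → q i * E S = 0 := by
    intro i S hi
    have hic : i ∈ Sᶜ := Finset.mem_compl.mpr hi
    rw [hE]
    simp only
    rw [← Finset.mul_prod_erase Sᶜ _ hic]
    calc q i * ((∏ j ∈ S, q j) * ((1 - q i) * ∏ j ∈ Sᶜ.erase i, (1 - q j)))
        = (q i * (1 - q i)) * ((∏ j ∈ S, q j) * ∏ j ∈ Sᶜ.erase i, (1 - q j)) := by ring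
      _ = 0 := by rw [hq1, zero_mul]
  -- decomposition of q i
  have hqdec : ∀ i, q i = ∑ S : Finset (Fin n), (if i ∈ S then E S else 0) := by
    intro i
    conv_lhs => rw [← mul_one (q i), ← hEsum, Finset.mul_sum]
    refine Finset.sum_congr rfl fun S _ => ?_
    by_cases h : i ∈ S
    · rw [hmulE i S h, if_pos h]
    · rw [hmulE0 i S h, if_neg h]
  have hqsum : ∑ i, q i = ∑ S : Finset (Fin n), S.card • E S := by
    calc ∑ i, q i = ∑ i, ∑ S : Finset (Fin n), (if i ∈ S then E S else 0) := by
          exact Finset.sum_congr rfl fun i _ => hqdec i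
      _ = ∑ S : Finset (Fin n), ∑ i, (if i ∈ S then E S else 0) := Finset.sum_comm
      _ = ∑ S : Finset (Fin n), S.card • E S := by
          refine Finset.sum_congr rfl fun S _ => ?_
          rw [Finset.sum_ite_mem, Finset.univ_inter, Finset.sum_const]
  -- idempotency
  have hEidem : ∀ S, E S * E S = E S := by
    intro S
    rw [hE]
    simp only
    rw [mul_mul_mul_comm, ← Finset.prod_mul_distrib, ← Finset.prod_mul_distrib]
    congr 1
    · exact Finset.prod_congr rfl fun i _ => hq2 i
    · refine Finset.prod_congr rfl fun i _ => ?_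
      linear_combination hq2 i
  -- vanishing on non-independent sets
  have hEzero : ∀ S i, i ∈ S → i + 1 ∈ S → E S = 0 := by
    intro S i hi hi1
    have h1 : i + 1 ∈ S.erase i := Finset.mem_erase.mpr ⟨hne i, hi1⟩
    rw [hE]
    simp only
    rw [← Finset.mul_prod_erase S q hi, ← Finset.mul_prod_erase _ q h1]
    calc q i * (q (i + 1) * ∏ j ∈ (S.erase i).erase (i + 1), q j) * ∏ j ∈ Sᶜ, (1 - q j)
        = (q i * q (i + 1)) * ((∏ j ∈ (S.erase i).erase (i + 1), q j) * ∏ j ∈ Sᶜ, (1 - q j)) := by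
          ring
      _ = 0 := by rw [hqorth, zero_mul]
  -- Hermitian images
  have hpmul : ∀ a b : R, (φ a)ᴴ = φ a → (φ b)ᴴ = φ b → (φ (a * b))ᴴ = φ (a * b) := by
    intro a b ha hb
    rw [_root_.map_mul, conjTranspose_mul, ha, hb, ← _root_.map_mul, ← _root_.map_mul, mul_comm]
  have hFherm : ∀ S, (φ (E S))ᴴ = φ (E S) := by
    intro S
    rw [hE]
    simp only
    refine hpmul _ _ ?_ ?_
    · exact Finset.prod_induction q (fun x => (φ x)ᴴ = φ x) hpmul
        (by show (φ 1)ᴴ = φ 1; rw [_root_.map_one]; exact conjTranspose_one) (fun i _ => hherm i)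
    · refine Finset.prod_induction _ (fun x => (φ x)ᴴ = φ x) hpmul
        (by show (φ 1)ᴴ = φ 1; rw [_root_.map_one]; exact conjTranspose_one) (fun i _ => ?_)
      show (φ (1 - q i))ᴴ = φ (1 - q i)
      rw [map_sub, _root_.map_one, conjTranspose_sub, conjTranspose_one, hherm]
  have hFpsd : ∀ S, (φ (E S)).PosSemidef := by
    intro S
    have h : φ (E S) = (φ (E S))ᴴ * φ (E S) := by
      conv_lhs => rw [← hEidem S]
      rw [_root_.map_mul, hFherm]
    rw [h]
    exact posSemidef_conjTranspose_mul_self _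
  -- main identity
  have key : ((c : ℂ)) • (1 : Matrix (Fin d) (Fin d) ℂ) - ∑ i, φ (q i)
      = ∑ S : Finset (Fin n), ((c : ℂ) - (S.card : ℂ)) • φ (E S) := by
    have h1 : (1 : Matrix (Fin d) (Fin d) ℂ) = ∑ S : Finset (Fin n), φ (E S) := by
      rw [← map_sum, hEsum, _root_.map_one]
    have h2 : ∑ i, φ (q i) = ∑ S : Finset (Fin n), (S.card : ℂ) • φ (E S) := by
      rw [← map_sum, hqsum, map_sum]
      refine Finset.sum_congr rfl fun S _ => ?_
      rw [map_nsmul, Nat.cast_smul_eq_nsmul]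
    rw [h1, h2, Finset.smul_sum, ← Finset.sum_sub_distrib]
    refine Finset.sum_congr rfl fun S _ => ?_
    rw [sub_smul]
  rw [key]
  refine Finset.sum_induction _ _ (fun a b ha hb => ha.add hb) Matrix.PosSemidef.zero
    fun S _ => ?_
  by_cases hind : ∀ i ∈ S, i + 1 ∉ S
  · have hle := hcard S hind
    have hcast : ((c : ℂ) - (S.card : ℂ)) = (((c - S.card : ℝ)) : ℂ) := by push_cast; ring
    rw [hcast]
    exact aux_psd_smul (hFpsd S) (by linarith)
  · push_neg at hind
    obtain ⟨i, hi, hi1⟩ := hind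
    rw [hEzero S i hi hi1, map_zero, smul_zero]
    exact Matrix.PosSemidef.zero

theorem commuting_projections_cycle_classical_bound
    (n d : ℕ) [NeZero n] (hn : Odd n) (hn3 : 3 ≤ n)
    (Pi : Fin n → Matrix (Fin d) (Fin d) ℂ)
    (hherm : ∀ i, (Pi i)ᴴ = Pi i)
    (hidem : ∀ i, Pi i * Pi i = Pi i)
    (hcomm : ∀ i j, Pi i * Pi j = Pi j * Pi i)
    (horth : ∀ i : Fin n, Pi i * Pi (i + 1) = 0)
    (ρ : Matrix (Fin d) (Fin d) ℂ)
    (hρ : ρ.PosSemidef) (hρtr : ρ.trace = 1) :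
    (∑ i, (Pi i * ρ).trace).re ≤ ((n : ℝ) - 1) / 2 := by
  classical
  have hcomm' : ∀ a ∈ Set.range Pi, ∀ b ∈ Set.range Pi, a * b = b * a := by
    rintro _ ⟨i, rfl⟩ _ ⟨j, rfl⟩; exact hcomm i j
  letI inst : CommRing ↥(Algebra.adjoin ℂ (Set.range Pi)) := Algebra.adjoinCommRingOfComm ℂ hcomm'
  let φ : ↥(Algebra.adjoin ℂ (Set.range Pi)) →+* Matrix (Fin d) (Fin d) ℂ :=
    { toFun := Subtype.val
      map_one' := rfl
      map_mul' := fun _ _ => rfl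
      map_zero' := rfl
      map_add' := fun _ _ => rfl }
  let q : Fin n → ↥(Algebra.adjoin ℂ (Set.range Pi)) :=
    fun i => ⟨Pi i, Algebra.subset_adjoin ⟨i, rfl⟩⟩
  have hq2 : ∀ i, q i * q i = q i := by
    intro i
    apply Subtype.ext
    show Pi i * Pi i = Pi i
    exact hidem i
  have hqorth : ∀ i, q i * q (i + 1) = 0 := by
    intro i
    apply Subtype.ext
    show Pi i * Pi (i + 1) = 0
    exact horth i
  have hφherm : ∀ i, (φ (q i))ᴴ = φ (q i) := fun i => hherm i
  have hne : ∀ i : Fin n, i + 1 ≠ i := by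
    intro i h
    have h10 : (1 : Fin n) = 0 := add_left_cancel (h.trans (add_zero i).symm)
    have h1 : (1 : Fin n).val = 1 := by
      rw [Fin.val_one']
      exact Nat.mod_eq_of_lt (by omega)
    have := congrArg Fin.val h10
    rw [h1, Fin.val_zero] at this
    exact one_ne_zero this
  have hcard : ∀ S : Finset (Fin n), (∀ i ∈ S, i + 1 ∉ S) → (S.card : ℝ) ≤ ((n : ℝ) - 1) / 2 := by
    intro S hS
    have := aux_card hn S hS
    have hn1 : (1 : ℝ) ≤ (n : ℝ) := by exact_mod_cast Nat.one_le_iff_ne_zero.mpr (NeZero.ne n)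
    have h2 : (2 * S.card + 1 : ℝ) ≤ (n : ℝ) := by exact_mod_cast this
    linarith
  have hpsd := aux_key φ q hq2 hqorth hφherm hne hcard
  have hφq : ∀ i, φ (q i) = Pi i := fun i => rfl
  simp only [hφq] at hpsd
  -- now the trace computation
  set c : ℝ := ((n : ℝ) - 1) / 2 with hc
  set M : Matrix (Fin d) (Fin d) ℂ := (c : ℂ) • 1 - ∑ i, Pi i with hM
  have htr0 : 0 ≤ ((M * ρ).trace).re := aux_trace_nonneg hpsd hρ
  have hsum : (∑ i, (Pi i * ρ).trace) = ((∑ i, Pi i) * ρ).trace := by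
    rw [Finset.sum_mul, trace_sum]
  have hexp : ((∑ i, Pi i) * ρ).trace = (c : ℂ) - (M * ρ).trace := by
    have : (∑ i, Pi i) = (c : ℂ) • 1 - M := by rw [hM]; exact (sub_sub_cancel _ _).symm
    rw [this, Matrix.sub_mul, Matrix.smul_mul, Matrix.one_mul, trace_sub, trace_smul, hρtr]
    simp
  rw [hsum, hexp]
  have : ((c : ℂ) - (M * ρ).trace).re = c - ((M * ρ).trace).re := by
    simp [Complex.sub_re]
  rw [this]
  linarith
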